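/- Let c > 0, K ∈ ℝ, and π_max ∈ (0,1). Define f : [0, π_max] → ℝ by f(0) = 0 and f(π) = K·π − c/ln(π) for π ∈ (0, π_max]. If π* ∈ [0, π_max] is a minimizer of f over [0, π_max], then π* = 0, or π* = π_max, or (e^{−2} < π* < π_max and K + c/(π*·(ln π*)²) = 0). -/

import Mathlib

open Set

/-- `x ↦ x (ln x)²` is strictly increasing on `(0, e⁻²]`. -/
lemma g_strict_mono {a b : ℝ} (ha : 0 < a) (hab : a < b) (hb : b ≤ Real.exp (-2)) :
    a * (Real.log a) ^ 2 < b * (Real.log b) ^ 2 := by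
  have key : StrictMonoOn (fun x : ℝ => x * (Real.log x) ^ 2) (Icc a b) := by
    apply strictMonoOn_of_deriv_pos (convex_Icc a b)
    · apply ContinuousOn.mul continuousOn_id
      exact (Real.continuousOn_log.mono (fun x hx => by
        simp only [mem_compl_iff, mem_singleton_iff]
        exact ne_of_gt (lt_of_lt_of_le ha hx.1))).pow 2
    · intro x hx
      rw [interior_Icc] at hx
      have hx0 : 0 < x := ha.trans hx.1
      have hlogx : Real.log x < -2 := by
        calc Real.log x < Real.log (Real.exp (-2)) :=
              Real.log_lt_log hx0 (lt_of_lt_of_le hx.2 hb)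
          _ = -2 := Real.log_exp _
      have hd : HasDerivAt (fun x : ℝ => x * (Real.log x) ^ 2)
          (1 * (Real.log x) ^ 2 + x * (2 * Real.log x ^ 1 * x⁻¹)) x := by
        exact (hasDerivAt_id x).mul ((Real.hasDerivAt_log hx0.ne').pow 2)
      rw [hd.deriv]
      have : 1 * Real.log x ^ 2 + x * (2 * Real.log x ^ 1 * x⁻¹)
          = Real.log x * (Real.log x + 2) := by
        field_simp
      rw [this]
      have h1 : Real.log x < 0 := hlogx.trans (by norm_num)
      have h2 : Real.log x + 2 < 0 := by linarith
      exact mul_pos_of_neg_of_neg h1 h2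
  exact key (left_mem_Icc.2 hab.le) (right_mem_Icc.2 hab.le) hab

theorem single_probability_minimizer (c K πmax : ℝ) (hc : 0 < c)
    (hπmax : πmax ∈ Set.Ioo (0 : ℝ) 1)
    (f : ℝ → ℝ) (hf0 : f 0 = 0)
    (hf : ∀ π ∈ Set.Ioc (0 : ℝ) πmax, f π = K * π - c / Real.log π)
    (πs : ℝ) (hπs : πs ∈ Set.Icc (0 : ℝ) πmax)
    (hmin : ∀ x ∈ Set.Icc (0 : ℝ) πmax, f πs ≤ f x) :
    πs = 0 ∨ πs = πmax ∨
      (Real.exp (-2) < πs ∧ πs < πmax ∧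
        K + c / (πs * (Real.log πs) ^ 2) = 0) := by
  rcases eq_or_lt_of_le hπs.1 with h0 | h0
  · exact Or.inl h0.symm
  rcases eq_or_lt_of_le hπs.2 with hm | hm
  · exact Or.inr (Or.inl hm)
  -- interior case
  have hderiv : ∀ x ∈ Ioo (0 : ℝ) πmax,
      HasDerivAt f (K + c / (x * (Real.log x) ^ 2)) x := by
    intro x hx
    have hx1 : x < 1 := hx.2.trans hπmax.2
    have hlog : Real.log x ≠ 0 := by
      have : Real.log x < 0 := Real.log_neg hx.1 hx1
      exact this.ne
    have hform : HasDerivAt (fun π : ℝ => K * π - c / Real.log π)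
        (K + c / (x * (Real.log x) ^ 2)) x := by
      have h1 : HasDerivAt (fun π : ℝ => K * π) K x := by
        simpa using (hasDerivAt_id x).const_mul K
      have h2 : HasDerivAt (fun π : ℝ => c / Real.log π)
          ((0 * Real.log x - c * x⁻¹) / (Real.log x) ^ 2) x :=
        (hasDerivAt_const x c).div (Real.hasDerivAt_log hx.1.ne') hlog
      have : HasDerivAt (fun π : ℝ => K * π - c / Real.log π) _ x := h1.sub h2
      convert this using 1
      have hx0 : x ≠ 0 := hx.1.ne'
      field_simp
      ring
    apply hform.congr_of_eventuallyEq
    filter_upwards [isOpen_Ioo.mem_nhds hx] with y hy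
    exact hf y ⟨hy.1, hy.2.le⟩
  -- stationarity
  have hlocal : IsLocalMin f πs := by
    have : ∀ᶠ y in nhds πs, f πs ≤ f y := by
      filter_upwards [isOpen_Ioo.mem_nhds (⟨h0, hm⟩ : πs ∈ Ioo 0 πmax)] with y hy
      exact hmin y ⟨hy.1.le, hy.2.le⟩
    exact this
  have hstat : K + c / (πs * (Real.log πs) ^ 2) = 0 :=
    hlocal.hasDerivAt_eq_zero (hderiv πs ⟨h0, hm⟩)
  refine Or.inr (Or.inr ⟨?_, hm, hstat⟩)
  -- show exp(-2) < πs by contradiction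
  by_contra hle
  push_neg at hle
  have hK : K = -(c / (πs * (Real.log πs) ^ 2)) := by linarith
  have hlogπs : Real.log πs ≠ 0 := (Real.log_neg h0 (hm.trans hπmax.2)).ne
  have hgπs : 0 < πs * (Real.log πs) ^ 2 :=
    mul_pos h0 (pow_two_pos_of_ne_zero hlogπs)
  -- strict mono of f on [πs/2, πs]
  have hmono : StrictMonoOn f (Icc (πs / 2) πs) := by
    apply strictMonoOn_of_deriv_pos (convex_Icc _ _)
    · -- continuity
      have hcont : ContinuousOn (fun π : ℝ => K * π - c / Real.log π)
          (Icc (πs / 2) πs) := by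
        apply ContinuousOn.sub (continuousOn_const.mul continuousOn_id)
        apply ContinuousOn.div continuousOn_const
        · exact Real.continuousOn_log.mono (fun x hx => by
            simp only [mem_compl_iff, mem_singleton_iff]
            exact ne_of_gt (lt_of_lt_of_le (by linarith) hx.1))
        · intro x hx
          have hx0 : 0 < x := lt_of_lt_of_le (by linarith) hx.1
          have hx1 : x < 1 := lt_of_le_of_lt hx.2 (hm.trans hπmax.2)
          exact (Real.log_neg hx0 hx1).ne
      exact hcont.congr (fun x hx =>
        hf x ⟨lt_of_lt_of_le (by linarith) hx.1, hx.2.trans hm.le⟩)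
    · intro x hx
      rw [interior_Icc] at hx
      have hx0 : 0 < x := lt_trans (by linarith) hx.1
      have hxIoo : x ∈ Ioo (0 : ℝ) πmax := ⟨hx0, hx.2.trans hm⟩
      rw [(hderiv x hxIoo).deriv, hK]
      have hg : x * (Real.log x) ^ 2 < πs * (Real.log πs) ^ 2 :=
        g_strict_mono hx0 hx.2 hle
      have hxne : Real.log x ≠ 0 :=
        (Real.log_neg hx0 (hx.2.trans (hm.trans hπmax.2))).ne
      have hgx : 0 < x * (Real.log x) ^ 2 :=
        mul_pos hx0 (pow_two_pos_of_ne_zero hxne)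
      have : c / (πs * (Real.log πs) ^ 2) < c / (x * (Real.log x) ^ 2) :=
        div_lt_div_of_pos_left hc hgx hg
      linarith
  have hhalf : πs / 2 ∈ Icc (0 : ℝ) πmax := ⟨by linarith, by linarith⟩
  have : f (πs / 2) < f πs :=
    hmono (left_mem_Icc.2 (by linarith)) (right_mem_Icc.2 (by linarith)) (by linarith)
  exact absurd (hmin _ hhalf) (not_le.2 this)
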